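/- Let X = ℓ²(ℕ) (so X* = X), let B: ℓ² → ℓ² be the diagonal operator (ξ_k)_{k∈ℕ} ↦ (ξ_k/k)_{k∈ℕ}, and let A = B⁻¹. Then: (i) ran B = dom A is dense in ℓ² but not closed; (ii) the point x = (k^{−4/3})_{k∈ℕ} lies in ℓ² ∖ ran B, and its truncations xₙ = (1^{−4/3}, …, n^{−4/3}, 0, 0, …) lie in ran B, converge to x, and satisfy ⟨xₙ, Axₙ⟩ = Σ_{k=1}^{n} k^{−5/3} → ζ(5/3) ∈ ℝ; consequently dom A ⊊ dom q_B*; (iii) therefore 𝒜_A ≠ ℬ_A and 𝒜_A is not lower semicontinuous, so 𝒜_A is a representer for A that is not autoconjugate. -/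

import Mathlib

noncomputable section
open scoped Classical RealInnerProductSpace
open Filter Topology

/-- The real Hilbert space `ℓ²(ℕ)`. -/
abbrev ellTwo : Type := lp (fun _ : ℕ => ℝ) 2

namespace Stmt19

variable (B : ellTwo →L[ℝ] ellTwo)

/-- The inverse `A = B⁻¹ : ℓ² ⇉ ℓ²`, with graph `{(Bu, u) : u ∈ ℓ²}`. -/
def invOp : ellTwo → Set ellTwo := fun x => {u | B u = x}

/-- `q_B(u) = ½⟨Bu,u⟩`. -/
def qB : ellTwo → ℝ := fun u => 1 / 2 * ⟪B u, u⟫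

/-- `q_B*(x) = sup_u (⟨x,u⟩ - q_B(u))`. -/
def qBstar : ellTwo → EReal := fun x => ⨆ u : ellTwo, ((⟪x, u⟫ - qB B u : ℝ) : EReal)

/-- The Fitzpatrick function of `A = B⁻¹`:
`F_A(x,x*) = sup_u (⟨x,u⟫ + ⟨Bu,x*⟩ - ⟨Bu,u⟩)`. -/
def fitzInv : ellTwo × ellTwo → EReal :=
  fun p => ⨆ u : ellTwo, ((⟪p.1, u⟫ + ⟪B u, p.2⟫ - ⟪B u, u⟫ : ℝ) : EReal)

/-- The Fenchel conjugate of `F : ℓ² × ℓ² → (-∞,+∞]` (dual variable first):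
`F*(x*,x) = sup_{(y,y*)} (⟨y,x*⟩ + ⟨x,y*⟩ - F(y,y*))`. -/
def hconj2 (F : ellTwo × ellTwo → EReal) : ellTwo × ellTwo → EReal :=
  fun p => ⨆ q : ellTwo × ellTwo, ((⟪q.1, p.1⟫ + ⟪p.2, q.2⟫ : ℝ) : EReal) - F q

/-- The Penot–Zălinescu function of `A = B⁻¹`. -/
def pzInv : ellTwo × ellTwo → EReal :=
  fun p => ⨅ y' : ellTwo,
    ((1 / 2 : ℝ) : EReal) * fitzInv B (p.1, p.2 + y')
      + ((1 / 2 : ℝ) : EReal) * hconj2 (fitzInv B) (p.2 - y', p.1)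

/-- The proximal-average based function of `A = B⁻¹`. -/
def bwInv : ellTwo × ellTwo → EReal :=
  fun p => ⨅ q : ellTwo × ellTwo,
    ((1 / 2 : ℝ) : EReal) * fitzInv B (p.1 + q.1, p.2 + q.2)
      + ((1 / 2 : ℝ) : EReal) * hconj2 (fitzInv B) (p.2 - q.2, p.1 - q.1)
      + ((1 / 2 * ‖q.1‖ ^ 2 + 1 / 2 * ‖q.2‖ ^ 2 : ℝ) : EReal)

/-- `F` is autoconjugate. -/
def Autoconjugate (F : ellTwo × ellTwo → EReal) : Prop :=
  ∀ x x' : ellTwo, hconj2 F (x', x) = F (x, x')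

/-- `F` is a representer for `A : ℓ² ⇉ ℓ²`. -/
def IsRepresenter (F : ellTwo × ellTwo → EReal) (A : ellTwo → Set ellTwo) : Prop :=
  ∀ x x' : ellTwo, x' ∈ A x ↔ F (x, x') = ((⟪x, x'⟫ : ℝ) : EReal)

set_option maxHeartbeats 1000000
set_option linter.unusedSectionVars false

section Aux

/-- shorthand coordinates -/
def xcf : ℕ → ℝ := fun k => ((k : ℝ) + 1) ^ (-(4 / 3) : ℝ)
def ccf : ℕ → ℝ := fun k => ((k : ℝ) + 1) ^ (-(5 / 3) : ℝ)

lemma xcf_pos (k : ℕ) : 0 < xcf k := Real.rpow_pos_of_pos (by positivity) _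
lemma ccf_pos (k : ℕ) : 0 < ccf k := Real.rpow_pos_of_pos (by positivity) _

lemma rpadd (k : ℕ) (p q : ℝ) : ((k:ℝ)+1) ^ p * ((k:ℝ)+1) ^ q = ((k:ℝ)+1) ^ (p+q) :=
  (Real.rpow_add (by positivity) p q).symm

lemma summ_iff {p : ℝ} : Summable (fun k : ℕ => ((k:ℝ)+1) ^ p) ↔ p < -1 := by
  rw [show (fun k : ℕ => ((k:ℝ)+1) ^ p) = fun k : ℕ => ((k+1:ℕ):ℝ) ^ p by push_cast; rfl]
  rw [summable_nat_add_iff (f := fun n : ℕ => (n:ℝ)^p) 1]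
  exact Real.summable_nat_rpow

lemma summable_ccf : Summable ccf := summ_iff.mpr (by norm_num)

lemma xcf_sq (k : ℕ) : xcf k * (xcf k * ((k:ℝ)+1)) = ccf k := by
  have h : ((k:ℝ)+1) ^ (-(4/3):ℝ) * (((k:ℝ)+1) ^ (-(4/3):ℝ) * ((k:ℝ)+1) ^ (1:ℝ))
      = ((k:ℝ)+1) ^ (-(5/3):ℝ) := by
    rw [← mul_assoc, rpadd, rpadd]; norm_num
  unfold xcf ccf
  simpa [Real.rpow_one] using h

lemma mem_xbar : Memℓp xcf 2 := by
  apply memℓp_gen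
  have : Summable (fun k : ℕ => ((k:ℝ)+1) ^ (-(8/3) : ℝ)) := summ_iff.mpr (by norm_num)
  refine this.congr fun k => ?_
  rw [Real.norm_eq_abs, abs_of_pos (xcf_pos k),
    show (ENNReal.toReal 2) = (2:ℝ) by norm_num]
  unfold xcf
  rw [← Real.rpow_mul (by positivity)]
  norm_num

def xbar : ellTwo := ⟨xcf, mem_xbar⟩

lemma mem_fin (f : ℕ → ℝ) (n : ℕ) (h : ∀ k, n ≤ k → f k = 0) : Memℓp f 2 := by
  apply memℓp_gen
  refine summable_of_ne_finset_zero (s := Finset.range n) fun k hk => ?_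
  rw [h k (by simpa using hk)]
  simp

def xsd : ℕ → ellTwo := fun n =>
  ⟨fun k => if k < n then xcf k else 0,
   mem_fin _ n fun k hk => if_neg (not_lt.mpr hk)⟩

def und : ℕ → ellTwo := fun n =>
  ⟨fun k => (if k < n then xcf k else 0) * ((k:ℝ)+1),
   mem_fin _ n fun k hk => by rw [if_neg (not_lt.mpr hk), zero_mul]⟩

lemma xsd_apply (n k : ℕ) : xsd n k = if k < n then xcf k else 0 := rfl
lemma und_apply (n k : ℕ) : und n k = (if k < n then xcf k else 0) * ((k:ℝ)+1) := rfl
lemma xbar_apply (k : ℕ) : xbar k = xcf k := rfl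

lemma ip_tsum (f g : ellTwo) : ⟪f, g⟫ = ∑' k, f k * g k := by
  rw [lp.inner_eq_tsum (𝕜 := ℝ)]
  simp [RCLike.inner_apply, starRingEnd_apply, mul_comm]

lemma ip_summable (f g : ellTwo) : Summable fun k => f k * g k := by
  have := lp.summable_inner (𝕜 := ℝ) f g
  simpa [RCLike.inner_apply, starRingEnd_apply, mul_comm] using this

lemma fitz_lb (p : ellTwo × ellTwo) (u : ellTwo) :
    ((⟪p.1, u⟫ + ⟪B u, p.2⟫ - ⟪B u, u⟫ : ℝ) : EReal) ≤ fitzInv B p :=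
  le_iSup (fun u : ellTwo => ((⟪p.1, u⟫ + ⟪B u, p.2⟫ - ⟪B u, u⟫ : ℝ) : EReal)) u

lemma fitz_nonneg (p : ellTwo × ellTwo) : 0 ≤ fitzInv B p := by
  have h := fitz_lb B p 0
  simpa using h

lemma fitz_ne_bot (p : ellTwo × ellTwo) : fitzInv B p ≠ ⊥ :=
  fun h => by simpa [h] using fitz_nonneg B p

lemma inner4 (v : ellTwo) : ⟪B (v + v), v + v⟫ = 4 * ⟪B v, v⟫ := by
  rw [map_add, inner_add_left, inner_add_right]; ring


lemma sum_single_apply (x : ellTwo) (n k : ℕ) :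
    (∑ i ∈ Finset.range n, lp.single 2 i (x i)) k = if k < n then x k else 0 := by
  rw [lp.coeFn_sum, Finset.sum_apply]
  simp only [lp.single_apply, Finset.sum_dite_eq, Finset.mem_range]
  simp [Pi.single_apply, Finset.sum_ite_eq']

lemma tendsto_trunc (x : ellTwo) (xs : ℕ → ellTwo)
    (hxs : ∀ n k, xs n k = if k < n then x k else 0) :
    Tendsto xs atTop (𝓝 x) := by
  haveI : Fact ((1:ENNReal) ≤ 2) := ⟨by norm_num⟩
  have h := (lp.hasSum_single (by norm_num : (2:ENNReal) ≠ ⊤) x).tendsto_sum_nat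
  have e : (fun n => ∑ i ∈ Finset.range n, lp.single 2 i (x i)) = xs :=
    funext fun n => lp.ext (funext fun k => by rw [sum_single_apply, hxs])
  exact e ▸ h

lemma inner_trunc (n : ℕ) (f g : ellTwo)
    (hf : ∀ k, f k = if k < n then xcf k else 0)
    (hg : ∀ k, g k = f k * ((k:ℝ)+1)) :
    ⟪f, g⟫ = ∑ k ∈ Finset.range n, ccf k := by
  rw [ip_tsum]
  rw [tsum_eq_sum (s := Finset.range n) (fun k hk => by
    rw [hf k, if_neg (by simpa using hk), zero_mul])]
  refine Finset.sum_congr rfl fun k hk => ?_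
  rw [hg k, hf k, if_pos (Finset.mem_range.mp hk)]
  exact xcf_sq k

variable (hB : ∀ (u : ellTwo) (k : ℕ), B u k = u k / (k + 1))
include hB

lemma bip (f g : ellTwo) : ⟪B f, g⟫ = ∑' k, f k * g k / ((k:ℝ) + 1) := by
  rw [ip_tsum]
  exact tsum_congr fun k => by rw [hB]; ring

lemma bsym (f g : ellTwo) : ⟪B f, g⟫ = ⟪f, B g⟫ := by
  rw [bip B hB, ip_tsum]
  exact tsum_congr fun k => by rw [hB]; ring

lemma bpos (f : ellTwo) : 0 ≤ ⟪B f, f⟫ := by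
  rw [bip B hB]
  exact tsum_nonneg fun k => div_nonneg (mul_self_nonneg _) (by positivity)

lemma binj {f g : ellTwo} (h : B f = B g) : f = g := by
  apply lp.ext; funext k
  have hk : B f k = B g k := by rw [h]
  rw [hB, hB] at hk
  have h1 : ((k:ℝ)+1) ≠ 0 := by positivity
  field_simp at hk
  exact hk

lemma bzero {f : ellTwo} (h : ⟪B f, f⟫ = 0) : f = 0 := by
  have hs : Summable (fun k => f k * f k / ((k:ℝ)+1)) := by
    refine (ip_summable (B f) f).congr fun k => ?_
    rw [hB]; ring
  rw [bip B hB] at h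
  apply lp.ext; funext k
  have h1 := hs.le_tsum k (fun j _ => div_nonneg (mul_self_nonneg _) (by positivity))
  rw [h] at h1
  have h2 : 0 ≤ f k * f k / ((k:ℝ)+1) := div_nonneg (mul_self_nonneg _) (by positivity)
  have h3 : f k * f k / ((k:ℝ)+1) = 0 := le_antisymm h1 h2
  have h4 : ((k:ℝ)+1) ≠ 0 := by positivity
  have h5 : f k * f k = 0 := by field_simp at h3; simpa [sq] using h3
  have := mul_self_eq_zero.mp h5
  simpa [lp.coeFn_zero] using this

lemma bsmul (c : ℝ) (u v : ellTwo) : ⟪B (c • u), v⟫ = c * ⟪B u, v⟫ := by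
  rw [map_smul, real_inner_smul_left]

lemma expand (u v : ellTwo) :
    ⟪B (u - v), u - v⟫ = ⟪B u, u⟫ - 2 * ⟪B u, v⟫ + ⟪B v, v⟫ := by
  have h1 : ⟪B v, u⟫ = ⟪B u, v⟫ := by rw [bsym B hB v u, real_inner_comm]
  rw [map_sub, inner_sub_left, inner_sub_right, inner_sub_right]
  linarith

lemma quad (u v : ellTwo) : ⟪B u, v⟫ - ⟪B u, u⟫ ≤ 4⁻¹ * ⟪B v, v⟫ := by
  have h := bpos B hB ((2:ℝ) • u - v)
  have he := expand B hB ((2:ℝ) • u) v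
  have h2 : ⟪B ((2:ℝ) • u), (2:ℝ) • u⟫ = 2 * (2 * ⟪B u, u⟫) := by
    rw [bsmul B hB, real_inner_smul_right]
  have h3 : ⟪B ((2:ℝ) • u), v⟫ = 2 * ⟪B u, v⟫ := bsmul B hB 2 u v
  rw [he, h2, h3] at h
  linarith

lemma fitz_eval (w z : ellTwo) :
    fitzInv B (B w, z) = ((4⁻¹ * ⟪B (w + z), w + z⟫ : ℝ) : EReal) := by
  apply le_antisymm
  · apply iSup_le; intro u
    rw [EReal.coe_le_coe_iff]
    have h1 : ⟪B w, u⟫ = ⟪B u, w⟫ := by rw [bsym B hB w u, real_inner_comm]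
    have h2 : ⟪B u, w⟫ + ⟪B u, z⟫ = ⟪B u, w + z⟫ := (inner_add_right _ _ _).symm
    have h3 := quad B hB u (w + z)
    linarith
  · have hval : ⟪B w, (2⁻¹:ℝ) • (w + z)⟫ + ⟪B ((2⁻¹:ℝ) • (w + z)), z⟫
        - ⟪B ((2⁻¹:ℝ) • (w + z)), (2⁻¹:ℝ) • (w + z)⟫ = 4⁻¹ * ⟪B (w + z), w + z⟫ := by
      have e1 : ⟪B w, (2⁻¹:ℝ) • (w + z)⟫ = 2⁻¹ * ⟪B w, w + z⟫ := real_inner_smul_right _ _ _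
      have e2 : ⟪B ((2⁻¹:ℝ) • (w + z)), z⟫ = 2⁻¹ * ⟪B (w + z), z⟫ := by
        rw [map_smul, real_inner_smul_left]
      have e3 : ⟪B ((2⁻¹:ℝ) • (w + z)), (2⁻¹:ℝ) • (w + z)⟫
          = 2⁻¹ * (2⁻¹ * ⟪B (w + z), w + z⟫) := by
        rw [map_smul, real_inner_smul_left, real_inner_smul_right]
      have e4 : ⟪B w, w + z⟫ = ⟪B (w + z), w + z⟫ - ⟪B z, w + z⟫ := by
        rw [map_add, inner_add_left]; ring
      have e5 : ⟪B (w + z), z⟫ = ⟪B z, w + z⟫ := by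
        rw [bsym B hB (w + z) z, real_inner_comm]
      rw [e1, e2, e3, e4, e5]; ring
    have hlb := fitz_lb B (B w, z) ((2⁻¹:ℝ) • (w + z))
    exact le_trans (EReal.coe_le_coe_iff.mpr (le_of_eq hval.symm)) hlb

lemma hconj_ne (x' x : ellTwo) (h : x ≠ B x') : hconj2 (fitzInv B) (x', x) = ⊤ := by
  rw [EReal.eq_top_iff_forall_lt]
  intro y
  set z : ellTwo := x - B x' with hz
  have hzne : z ≠ 0 := sub_ne_zero.mpr h
  have hzpos : (0:ℝ) < ⟪z, z⟫ := by
    rcases lt_or_eq_of_le (real_inner_self_nonneg (x := z)) with h' | h'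
    · exact h'
    · exact absurd ((inner_self_eq_zero (𝕜 := ℝ)).mp h'.symm) hzne
  set t : ℝ := (y + 1) / ⟪z, z⟫ with ht
  have key : ((-t) • z) + t • z = 0 := by rw [neg_smul]; exact neg_add_cancel _
  have hF : fitzInv B (B ((-t) • z), t • z) = ((0:ℝ) : EReal) := by
    rw [fitz_eval B hB]
    norm_num [key]
  have hval : ⟪B ((-t) • z), x'⟫ + ⟪x, t • z⟫ = y + 1 := by
    rw [map_smul, real_inner_smul_left, real_inner_smul_right]
    have e1 : ⟪B z, x'⟫ = ⟪z, B x'⟫ := bsym B hB z x'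
    have e2 : ⟪x, z⟫ = ⟪z, x⟫ := real_inner_comm _ _
    have e3 : ⟪z, x⟫ - ⟪z, B x'⟫ = ⟪z, z⟫ := by
      conv_rhs => rw [hz]
      rw [inner_sub_right]
    have e4 : t * ⟪z, z⟫ = y + 1 := div_mul_cancel₀ _ hzpos.ne'
    calc -t * ⟪B z, x'⟫ + t * ⟪x, z⟫ = t * (⟪z, x⟫ - ⟪z, B x'⟫) := by rw [e1, e2]; ring
      _ = t * ⟪z, z⟫ := by rw [e3]
      _ = y + 1 := e4
  have hle := le_iSup
    (fun q : ellTwo × ellTwo => ((⟪q.1, x'⟫ + ⟪x, q.2⟫ : ℝ) : EReal) - fitzInv B q)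
    ((B ((-t) • z), t • z) : ellTwo × ellTwo)
  refine lt_of_lt_of_le ?_ hle
  show (y : EReal) < ((⟪B ((-t) • z), x'⟫ + ⟪x, t • z⟫ : ℝ) : EReal)
      - fitzInv B (B ((-t) • z), t • z)
  rw [hval, hF, ← EReal.coe_sub]
  exact_mod_cast (by linarith : y < y + 1 - 0)

lemma hconj_graph (v : ellTwo) :
    hconj2 (fitzInv B) (v, B v) = ((⟪B v, v⟫ : ℝ) : EReal) := by
  apply le_antisymm
  · apply iSup_le; intro q
    show ((⟪q.1, v⟫ + ⟪B v, q.2⟫ : ℝ) : EReal) - fitzInv B q ≤ _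
    have hlb : ((⟪q.1, v⟫ + ⟪B v, q.2⟫ - ⟪B v, v⟫ : ℝ) : EReal) ≤ fitzInv B q := by
      have := fitz_lb B q v
      have e : ⟪B v, q.2⟫ = ⟪q.2, B v⟫ := real_inner_comm _ _
      -- fitz_lb gives ⟪q.1,v⟫ + ⟪B v, q.2⟫ - ⟪B v, v⟫ directly
      exact this
    by_cases hF : fitzInv B q = ⊤
    · rw [hF, EReal.sub_top]; exact bot_le
    · have hFb : fitzInv B q ≠ ⊥ := fitz_ne_bot B q
      rw [← EReal.coe_toReal hF hFb] at hlb ⊢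
      rw [← EReal.coe_sub, EReal.coe_le_coe_iff]
      rw [EReal.coe_le_coe_iff] at hlb
      linarith
  · have hF : fitzInv B (B v, v) = ((⟪B v, v⟫ : ℝ) : EReal) := by
      rw [fitz_eval B hB]
      have : ⟪B (v + v), v + v⟫ = 4 * ⟪B v, v⟫ := by
        rw [map_add, inner_add_left, inner_add_right]; ring
      rw [this, EReal.coe_eq_coe_iff]
      ring
    have hle := le_iSup
      (fun q : ellTwo × ellTwo => ((⟪q.1, v⟫ + ⟪B v, q.2⟫ : ℝ) : EReal) - fitzInv B q)
      ((B v, v) : ellTwo × ellTwo)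
    refine le_trans ?_ hle
    show _ ≤ ((⟪B v, v⟫ + ⟪B v, v⟫ : ℝ) : EReal) - fitzInv B (B v, v)
    rw [hF, ← EReal.coe_sub]
    exact EReal.coe_le_coe_iff.mpr (by linarith)

lemma pz_top (x x' : ellTwo) (h : ∀ u : ellTwo, B u ≠ x) : pzInv B (x, x') = ⊤ := by
  refine le_antisymm le_top (le_iInf fun y' => ?_)
  have hc : hconj2 (fitzInv B) (x' - y', x) = ⊤ :=
    hconj_ne B hB (x' - y') x (fun he => h (x' - y') he.symm)
  rw [hc]
  rw [show ((1 / 2 : ℝ) : EReal) * (⊤ : EReal) = ⊤ from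
    EReal.coe_mul_top_of_pos (by norm_num)]
  rcases eq_or_ne (fitzInv B (x, x' + y')) ⊤ with hF | hF
  · rw [hF]
    rw [show ((1 / 2 : ℝ) : EReal) * (⊤ : EReal) = ⊤ from
      EReal.coe_mul_top_of_pos (by norm_num)]
    simp
  · rw [← EReal.coe_toReal hF (fitz_ne_bot B _), ← EReal.coe_mul, EReal.coe_add_top]

lemma pz_ran (u x' : ellTwo) :
    pzInv B (B u, x') = ((1 / 2 * ⟪B x', x'⟫ + 1 / 2 * ⟪B u, u⟫ : ℝ) : EReal) := by
  have hterm : ((1 / 2 : ℝ) : EReal) * fitzInv B (B u, x' + (x' - u))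
      + ((1 / 2 : ℝ) : EReal) * hconj2 (fitzInv B) (x' - (x' - u), B u)
      = ((1 / 2 * ⟪B x', x'⟫ + 1 / 2 * ⟪B u, u⟫ : ℝ) : EReal) := by
    have e1 : x' - (x' - u) = u := sub_sub_cancel _ _
    have e2 : u + (x' + (x' - u)) = x' + x' := by abel
    rw [e1, hconj_graph B hB, fitz_eval B hB, e2, inner4 B, ← EReal.coe_mul,
      ← EReal.coe_mul, ← EReal.coe_add, EReal.coe_eq_coe_iff]
    ring
  apply le_antisymm
  · exact iInf_le_of_le (x' - u) (le_of_eq hterm)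
  · refine le_iInf fun y' => ?_
    by_cases hy : x' - y' = u
    · have hyy : y' = x' - u := by rw [← hy]; abel
      rw [hyy]
      exact le_of_eq hterm.symm
    · have hc : hconj2 (fitzInv B) (x' - y', B u) = ⊤ := by
        refine hconj_ne B hB (x' - y') (B u) fun he => hy ?_
        exact (binj B hB he).symm
      rw [hc, fitz_eval B hB]
      rw [show ((1 / 2 : ℝ) : EReal) * (⊤ : EReal) = ⊤ from
        EReal.coe_mul_top_of_pos (by norm_num)]
      rw [← EReal.coe_mul, EReal.coe_add_top]
      exact le_top


lemma bsingle (i : ℕ) (r : ℝ) : B (lp.single 2 i (r * ((i:ℝ)+1))) = lp.single 2 i r := by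
  apply lp.ext; funext k
  rw [hB]
  by_cases hk : k = i
  · subst hk
    rw [lp.single_apply_self, lp.single_apply_self]
    field_simp
  · rw [lp.single_apply_ne _ _ _ hk, lp.single_apply_ne _ _ _ hk, zero_div]

lemma range_dense : Dense (Set.range B : Set ellTwo) := by
  intro x
  haveI : Fact ((1:ENNReal) ≤ 2) := ⟨by norm_num⟩
  have h := (lp.hasSum_single (by norm_num : (2:ENNReal) ≠ ⊤) x).tendsto_sum_nat
  refine mem_closure_of_tendsto h (Filter.Eventually.of_forall fun n => ?_)
  refine ⟨∑ i ∈ Finset.range n, lp.single 2 i (x i * ((i:ℝ)+1)), ?_⟩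
  rw [map_sum]
  exact Finset.sum_congr rfl fun i _ => bsingle B hB i (x i)

lemma bund (n : ℕ) : B (und n) = xsd n := by
  apply lp.ext; funext k
  rw [hB]
  show ((if k < n then xcf k else 0) * ((k:ℝ)+1)) / ((k:ℝ)+1) = _
  rw [mul_div_cancel_right₀ _ (by positivity : ((k:ℝ)+1) ≠ 0)]
  rfl

lemma notin_range (x : ellTwo) (hx : ∀ k, x k = xcf k) : x ∉ Set.range B := by
  rintro ⟨u, hu⟩
  have hcoord : ∀ k : ℕ, u k = xcf k * ((k:ℝ)+1) := by
    intro k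
    have h1 : B u k = x k := by rw [hu]
    rw [hB, hx] at h1
    rwa [div_eq_iff (by positivity : ((k:ℝ)+1) ≠ 0)] at h1
  have hs : Summable fun k : ℕ => ‖u k‖ ^ (ENNReal.toReal 2) := (lp.memℓp u).summable (by norm_num)
  have hone : ∀ k : ℕ, xcf k * ((k:ℝ)+1) = ((k:ℝ)+1) ^ (-(1/3) : ℝ) := by
    intro k
    have h : ((k:ℝ)+1) ^ (-(4/3):ℝ) * ((k:ℝ)+1) ^ (1:ℝ) = ((k:ℝ)+1) ^ (-(1/3):ℝ) := by
      rw [rpadd]; norm_num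
    unfold xcf
    simpa [Real.rpow_one] using h
  have hs2 : Summable (fun k : ℕ => ((k:ℝ)+1) ^ (-(2/3) : ℝ)) := by
    refine hs.congr fun k => ?_
    rw [hcoord k, hone k, Real.norm_eq_abs,
      abs_of_pos (Real.rpow_pos_of_pos (by positivity) _),
      show (ENNReal.toReal 2) = (2:ℝ) by norm_num,
      ← Real.rpow_mul (by positivity)]
    norm_num
  rw [summ_iff] at hs2
  norm_num at hs2

lemma key_ineq (x : ellTwo) (hx : ∀ k, x k = xcf k) (v : ellTwo) :
    ⟪x, v⟫ ≤ 1/2 * ⟪B v, v⟫ + 1/2 * ∑' k, ccf k := by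
  have S1 : Summable fun k => x k * v k := ip_summable x v
  have S2 : Summable fun k => (B v) k * v k := ip_summable (B v) v
  have S3 : Summable fun k => 1/2 * ((B v) k * v k) + 1/2 * ccf k :=
    (S2.mul_left _).add (summable_ccf.mul_left _)
  have hpt : ∀ k, x k * v k ≤ 1/2 * ((B v) k * v k) + 1/2 * ccf k := by
    intro k
    rw [hx k, hB v k]
    have ht : (0:ℝ) < (k:ℝ)+1 := by positivity
    have e := xcf_sq k
    have hkey : 1/2 * (v k / ((k:ℝ)+1) * v k) + 1/2 * ccf k - xcf k * v k
        = (v k - xcf k * ((k:ℝ)+1))^2 / (2 * ((k:ℝ)+1)) := by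
      rw [← e]; field_simp; ring
    have hnn : 0 ≤ (v k - xcf k * ((k:ℝ)+1))^2 / (2 * ((k:ℝ)+1)) := by positivity
    linarith
  calc ⟪x, v⟫ = ∑' k, x k * v k := ip_tsum x v
    _ ≤ ∑' k, (1/2 * ((B v) k * v k) + 1/2 * ccf k) := S1.tsum_le_tsum hpt S3
    _ = 1/2 * ∑' k, ((B v) k * v k) + 1/2 * ∑' k, ccf k := by
        rw [(S2.mul_left _).tsum_add (summable_ccf.mul_left _), tsum_mul_left, tsum_mul_left]
    _ = 1/2 * ⟪B v, v⟫ + 1/2 * ∑' k, ccf k := by rw [← ip_tsum]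


end Aux

/-- Example 6.5. Let `B : ℓ² → ℓ²` be the diagonal operator
`(ξ_k) ↦ (ξ_k/k)` and `A = B⁻¹`. Then `ran B = dom A` is dense but not closed; the point
`x = (k^{-4/3})` lies outside `ran B` while its truncations `xₙ` lie in `ran B`, converge
to `x`, and `⟨xₙ,Axₙ⟩ = Σ_{k≤n} k^{-5/3} → ζ(5/3)`, so `dom A ⊊ dom q_B*`; consequently
`𝒜_A ≠ ℬ_A`, `𝒜_A` is not lower semicontinuous, and `𝒜_A` is a representer for `A`
that is not autoconjugate. -/
theorem stmt19 (hB : ∀ (u : ellTwo) (k : ℕ), B u k = u k / (k + 1)) :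
    (Dense (Set.range B : Set ellTwo) ∧ ¬ IsClosed (Set.range B : Set ellTwo)) ∧
    (∀ x : ellTwo, (∀ k : ℕ, x k = ((k : ℝ) + 1) ^ (-(4 / 3) : ℝ)) →
      x ∉ Set.range B ∧
      ∀ xs : ℕ → ellTwo,
        (∀ n k : ℕ, xs n k = if k < n then ((k : ℝ) + 1) ^ (-(4 / 3) : ℝ) else 0) →
        ((∀ n, xs n ∈ Set.range B) ∧
         Tendsto xs atTop (𝓝 x) ∧
         ∀ u : ℕ → ellTwo, (∀ n, B (u n) = xs n) →
           (∀ n, ⟪xs n, u n⟫ = ∑ k ∈ Finset.range n, ((k : ℝ) + 1) ^ (-(5 / 3) : ℝ)) ∧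
           Summable (fun k : ℕ => ((k : ℝ) + 1) ^ (-(5 / 3) : ℝ)) ∧
           Tendsto (fun n => ⟪xs n, u n⟫) atTop
             (𝓝 (∑' k : ℕ, ((k : ℝ) + 1) ^ (-(5 / 3) : ℝ))))) ∧
    Set.range B ⊂ {x : ellTwo | qBstar B x ≠ ⊤} ∧
    pzInv B ≠ bwInv B ∧
    ¬ LowerSemicontinuous (pzInv B) ∧
    IsRepresenter (pzInv B) (invOp B) ∧
    ¬ Autoconjugate (pzInv B) := by
  have hxbar : ∀ k : ℕ, xbar k = xcf k := fun k => rfl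
  have hnotin : xbar ∉ Set.range B := notin_range B hB xbar hxbar
  have hpz_top : pzInv B (xbar, 0) = ⊤ :=
    pz_top B hB xbar 0 (fun u hu => hnotin ⟨u, hu⟩)
  have htrunc : Tendsto xsd atTop (𝓝 xbar) := tendsto_trunc xbar xsd (fun n k => rfl)
  refine ⟨⟨range_dense B hB, ?_⟩, ?_, ?_, ?_, ?_, ?_, ?_⟩
  · -- not closed
    intro hcl
    have h2 : ∀ n, xsd n ∈ Set.range B := fun n => ⟨und n, bund B hB n⟩
    exact hnotin (hcl.mem_of_tendsto htrunc (Filter.Eventually.of_forall h2))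
  · -- part 2
    intro x hx
    refine ⟨notin_range B hB x hx, ?_⟩
    intro xs hxs
    refine ⟨?_, ?_, ?_⟩
    · intro n
      refine ⟨und n, ?_⟩
      apply lp.ext; funext k
      rw [hB, hxs]
      show ((if k < n then xcf k else 0) * ((k:ℝ)+1)) / ((k:ℝ)+1) = _
      rw [mul_div_cancel_right₀ _ (by positivity : ((k:ℝ)+1) ≠ 0)]
      rfl
    · exact tendsto_trunc x xs (fun n k => by rw [hxs n k, hx k])
    · intro u hu
      have hcoords : ∀ n k, u n k = xs n k * ((k:ℝ)+1) := by
        intro n k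
        have h1 : B (u n) k = xs n k := by rw [hu]
        rw [hB] at h1
        rwa [div_eq_iff (by positivity : ((k:ℝ)+1) ≠ 0)] at h1
      have hinner : ∀ n, ⟪xs n, u n⟫ = ∑ k ∈ Finset.range n, ccf k := fun n =>
        inner_trunc n (xs n) (u n) (fun k => hxs n k) (hcoords n)
      refine ⟨fun n => hinner n, summable_ccf, ?_⟩
      exact Tendsto.congr (fun n => (hinner n).symm) summable_ccf.hasSum.tendsto_sum_nat
  · -- part 3
    rw [Set.ssubset_def]
    constructor
    · rintro y ⟨w, rfl⟩
      show qBstar B (B w) ≠ ⊤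
      have hle : qBstar B (B w) ≤ ((1/2 * ⟪B w, w⟫ : ℝ) : EReal) := by
        apply iSup_le; intro v
        rw [EReal.coe_le_coe_iff]
        simp only [qB]
        have h1 := bpos B hB (w - v)
        have h2 := expand B hB w v
        linarith
      exact ne_top_of_le_ne_top (EReal.coe_ne_top _) hle
    · intro hsub
      have hmem : xbar ∈ {x : ellTwo | qBstar B x ≠ ⊤} := by
        show qBstar B xbar ≠ ⊤
        have hle : qBstar B xbar ≤ ((1/2 * ∑' k, ccf k : ℝ) : EReal) := by
          apply iSup_le; intro v
          rw [EReal.coe_le_coe_iff]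
          simp only [qB]
          have h1 := key_ineq B hB xbar hxbar v
          linarith
        exact ne_top_of_le_ne_top (EReal.coe_ne_top _) hle
      exact hnotin (hsub hmem)
  · -- pzInv ≠ bwInv
    intro heq
    have hF0 : fitzInv B (xbar + xbar, (0:ellTwo) + 0) ≤ ((∑' k, ccf k : ℝ) : EReal) := by
      apply iSup_le; intro v
      rw [EReal.coe_le_coe_iff]
      have h1 : ⟪xbar + xbar, v⟫ = ⟪xbar, v⟫ + ⟪xbar, v⟫ := inner_add_left _ _ _
      have h2 : ⟪B v, (0:ellTwo) + 0⟫ = 0 := by simp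
      have h3 := key_ineq B hB xbar hxbar v
      have h4 := bpos B hB v
      linarith
    have hne : fitzInv B (xbar + xbar, (0:ellTwo) + 0) ≠ ⊤ :=
      ne_top_of_le_ne_top (EReal.coe_ne_top _) hF0
    have hfe : fitzInv B (xbar + xbar, (0:ellTwo) + 0)
        = (((fitzInv B (xbar + xbar, (0:ellTwo) + 0)).toReal : ℝ) : EReal) :=
      (EReal.coe_toReal hne (fitz_ne_bot B _)).symm
    have hc : hconj2 (fitzInv B) ((0:ellTwo) - 0, xbar - xbar) = ((0:ℝ) : EReal) := by
      rw [show ((0:ellTwo) - 0, xbar - xbar) = ((0:ellTwo), (0:ellTwo)) by rw [sub_self, sub_self]]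
      have hg := hconj_graph B hB 0
      rw [map_zero] at hg
      simpa using hg
    have hbw : bwInv B (xbar, 0) ≠ ⊤ := by
      refine ne_top_of_le_ne_top (EReal.coe_ne_top
        ((1/2 * (fitzInv B (xbar + xbar, (0:ellTwo) + 0)).toReal + 1/2 * 0
          + (1 / 2 * ‖xbar‖ ^ 2 + 1 / 2 * ‖(0:ellTwo)‖ ^ 2) : ℝ)))
        (iInf_le_of_le ((xbar, 0) : ellTwo × ellTwo) (le_of_eq ?_))
      show ((1 / 2 : ℝ) : EReal) * fitzInv B (xbar + xbar, (0:ellTwo) + 0)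
          + ((1 / 2 : ℝ) : EReal) * hconj2 (fitzInv B) ((0:ellTwo) - 0, xbar - xbar)
          + ((1 / 2 * ‖xbar‖ ^ 2 + 1 / 2 * ‖(0:ellTwo)‖ ^ 2 : ℝ) : EReal) = _
      rw [hc]
      conv_lhs => rw [hfe]
      norm_cast
    exact hbw (by rw [← heq]; exact hpz_top)
  · -- not lower semicontinuous
    intro hl
    have hev := hl (xbar, (0:ellTwo)) ((1/2 * ∑' k, ccf k : ℝ) : EReal)
      (by beta_reduce; rw [hpz_top]; exact EReal.coe_lt_top _)
    have htd : Tendsto (fun n => ((xsd n, (0:ellTwo)) : ellTwo × ellTwo)) atTop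
        (𝓝 (xbar, 0)) := htrunc.prodMk_nhds tendsto_const_nhds
    obtain ⟨n, hn⟩ := (htd.eventually hev).exists
    have hval : pzInv B (xsd n, (0:ellTwo))
        = ((1/2 * ⟪B (0:ellTwo), (0:ellTwo)⟫ + 1/2 * ⟪B (und n), und n⟫ : ℝ) : EReal) := by
      rw [← bund B hB n]
      exact pz_ran B hB (und n) 0
    have hBuu : ⟪B (und n), und n⟫ = ∑ k ∈ Finset.range n, ccf k := by
      rw [bund B hB n]
      exact inner_trunc n (xsd n) (und n) (fun k => rfl) (fun k => rfl)
    have hps : ∑ k ∈ Finset.range n, ccf k ≤ ∑' k, ccf k :=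
      summable_ccf.sum_le_tsum _ (fun k _ => (ccf_pos k).le)
    rw [hval, hBuu, show ⟪B (0:ellTwo), (0:ellTwo)⟫ = 0 by simp, gt_iff_lt,
      EReal.coe_lt_coe_iff] at hn
    linarith
  · -- representer
    intro x x'
    by_cases hx : ∃ u : ellTwo, B u = x
    · obtain ⟨u, rfl⟩ := hx
      rw [pz_ran B hB u x']
      constructor
      · intro hmem
        have hx'u : x' = u := binj B hB hmem
        subst hx'u
        rw [EReal.coe_eq_coe_iff]
        ring
      · intro heq
        rw [EReal.coe_eq_coe_iff] at heq
        have hexp := expand B hB u x'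
        have h0 : ⟪B (u - x'), u - x'⟫ = 0 := by rw [hexp]; linarith
        have h1 : u - x' = (0:ellTwo) := bzero B hB h0
        show B x' = B u
        rw [sub_eq_zero.mp h1]
    · have hnm : ∀ u : ellTwo, B u ≠ x := fun u hu => hx ⟨u, hu⟩
      rw [pz_top B hB x x' hnm]
      constructor
      · intro hmem; exact absurd hmem (hnm x')
      · intro h; exact absurd h.symm (EReal.coe_ne_top _)
  · -- not autoconjugate
    intro hac
    have h := hac xbar 0
    have hub : hconj2 (pzInv B) ((0:ellTwo), xbar) ≤ ((1/2 * ∑' k, ccf k : ℝ) : EReal) := by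
      apply iSup_le; intro q
      show ((⟪q.1, (0:ellTwo)⟫ + ⟪xbar, q.2⟫ : ℝ) : EReal) - pzInv B q ≤ _
      by_cases hq : ∃ u : ellTwo, B u = q.1
      · obtain ⟨u, hu⟩ := hq
        have e : pzInv B q = ((1/2 * ⟪B q.2, q.2⟫ + 1/2 * ⟪B u, u⟫ : ℝ) : EReal) := by
          have h2 := pz_ran B hB u q.2
          rwa [show ((B u : ellTwo), q.2) = q by rw [hu]] at h2
        rw [e, ← EReal.coe_sub, EReal.coe_le_coe_iff]
        have h3 := key_ineq B hB xbar hxbar q.2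
        have h4 := bpos B hB u
        have h5 : ⟪q.1, (0:ellTwo)⟫ = (0:ℝ) := inner_zero_right _
        linarith
      · have htop : pzInv B q = ⊤ := by
          have h2 := pz_top B hB q.1 q.2 (fun u hu => hq ⟨u, hu⟩)
          rwa [Prod.mk.eta] at h2
        rw [htop, EReal.sub_top]
        exact bot_le
    rw [h, hpz_top] at hub
    exact (EReal.coe_lt_top _).not_ge hub


end Stmt19
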